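/- arXiv:2004.02029 — 2 statements merged into one kernel-verified Lean document; each statement's English description precedes it below -/
import Mathlib

section
/- Assume no Rayleigh anomalies occur, i.e., k_{y,n} ≠ 0 for all n ∈ ℤ. Then for any (x,y), (x',y') ∈ ℝ² with y ≠ y', the series defining the quasi-periodic Green's function, ∑_{n∈ℤ} e^{i k_{x,n}(x−x') + i k_{y,n}|y−y'|} / k_{y,n}, converges absolutely. -/
set_option maxHeartbeats 1000000

/-- Absolute convergence of the series defining the quasi-periodic Green's function:
assuming no Rayleigh anomalies (`k_{y,n} ≠ 0` for all `n`), for any points with `y ≠ y'`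
the series `∑_{n∈ℤ} e^{i k_{x,n}(x-x') + i k_{y,n}|y-y'|} / k_{y,n}` converges absolutely. -/
theorem green_function_series_absolutely_convergent (k Λ θi : ℝ) (hk : 0 < k) (hΛ : 0 < Λ)
    (hθ : θi ∈ Set.Ioo (-(Real.pi / 2)) (Real.pi / 2))
    (kx : ℤ → ℝ) (hkx : ∀ n : ℤ, kx n = k * Real.sin θi + 2 * Real.pi * (n : ℝ) / Λ)
    (ky : ℤ → ℂ)
    (hky : ∀ n : ℤ, ky n =
      if k ^ 2 ≥ (kx n) ^ 2 then ((Real.sqrt (k ^ 2 - (kx n) ^ 2) : ℝ) : ℂ)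
      else Complex.I * ((Real.sqrt ((kx n) ^ 2 - k ^ 2) : ℝ) : ℂ))
    (hnoanom : ∀ n : ℤ, ky n ≠ 0)
    (x y x' y' : ℝ) (hyy : y ≠ y') :
    Summable (fun n : ℤ =>
      ‖Complex.exp (Complex.I * (kx n : ℂ) * ((x : ℂ) - (x' : ℂ))
          + Complex.I * ky n * ((|y - y'| : ℝ) : ℂ)) / ky n‖) := by
  set d := |y - y'| with hdd
  have hd : 0 < d := abs_pos.mpr (sub_ne_zero.mpr hyy)
  set a := k * Real.sin θi with ha
  set b := 2 * Real.pi / Λ with hb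
  have hb0 : 0 < b := by positivity
  set N : ℕ := ⌈4 * (|a| + k + 1) / (3 * b)⌉₊ with hN
  set r : ℝ := Real.exp (-(b / 4 * d)) with hr
  have hr0 : 0 < r := Real.exp_pos _
  have hr1 : r < 1 := by
    rw [hr, Real.exp_lt_one_iff]
    nlinarith
  have hg : Summable (fun n : ℤ => r ^ n.natAbs) := by
    apply Summable.of_nat_of_neg <;>
      simpa using summable_geometric_of_lt_one hr0.le hr1
  apply Summable.of_norm_bounded_eventually hg
  rw [Filter.eventually_cofinite]
  apply Set.Finite.subset (Set.finite_Icc (-(N : ℤ)) (N : ℤ))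
  intro n hn
  simp only [Set.mem_setOf_eq] at hn
  by_contra hmem
  apply hn
  -- from n ∉ Icc: N ≤ n.natAbs
  have hNle : (N : ℝ) ≤ (n.natAbs : ℝ) := by
    rw [Set.mem_Icc] at hmem
    push_neg at hmem
    have : N ≤ n.natAbs := by omega
    exact_mod_cast this
  set m : ℝ := (n.natAbs : ℝ) with hm
  have hmabs : |(n : ℝ)| = m := by
    simp [hm, Nat.cast_natAbs]
  have hm0 : 0 ≤ m := Nat.cast_nonneg _
  have hceil : 4 * (|a| + k + 1) / (3 * b) ≤ m := le_trans (Nat.le_ceil _) hNle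
  have hlin : |a| + (k + 1 + b / 4 * m) ≤ b * m := by
    rw [div_le_iff₀ (by positivity)] at hceil
    nlinarith
  -- |kx n| ≥ b * m - |a|
  have hkxn : kx n = a + b * n := by
    rw [hkx n, ha, hb]; ring
  have habs : k + 1 + b / 4 * m ≤ |kx n| := by
    have h1 : |b * (n : ℝ)| - |a| ≤ |kx n| := by
      rw [hkxn]
      have h := abs_add_le (a + b * n) (-a)
      rw [show a + b * (n : ℝ) + -a = b * n by ring, abs_neg] at h
      linarith
    have h2 : |b * (n : ℝ)| = b * m := by
      rw [abs_mul, hmabs, abs_of_pos hb0]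
    linarith
  have hsq : k ^ 2 + (1 + (b / 4 * m) ^ 2) ≤ kx n ^ 2 := by
    have h0 : 0 ≤ k + 1 + b / 4 * m := by positivity
    have h2 : (k + 1 + b / 4 * m) ^ 2 ≤ kx n ^ 2 := by
      rw [← sq_abs (kx n)]
      exact pow_le_pow_left₀ h0 habs 2
    nlinarith [mul_nonneg hk.le (mul_nonneg (by positivity : (0:ℝ) ≤ b / 4) hm0)]
  have hlt : k ^ 2 < kx n ^ 2 := by nlinarith [sq_nonneg (b / 4 * m)]
  set s : ℝ := Real.sqrt (kx n ^ 2 - k ^ 2) with hs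
  have hs1 : 1 ≤ s := by
    rw [hs]
    refine (Real.le_sqrt (by norm_num) (by linarith [sq_nonneg (b / 4 * m)])).mpr ?_
    norm_num
    linarith [sq_nonneg (b / 4 * m)]
  have hsm : b / 4 * m ≤ s := by
    rw [hs]
    refine (Real.le_sqrt (by positivity) (by linarith [sq_nonneg (b / 4 * m)])).mpr ?_
    linarith
  have hkyn : ky n = Complex.I * (s : ℂ) := by
    rw [hky n, if_neg (not_le.mpr hlt)]
  -- compute the norm
  have hnorm : ‖Complex.exp (Complex.I * (kx n : ℂ) * ((x : ℂ) - (x' : ℂ))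
      + Complex.I * ky n * ((d : ℝ) : ℂ)) / ky n‖ = Real.exp (-(s * d)) / s := by
    rw [hkyn, norm_div]
    congr 1
    · rw [Complex.norm_exp]
      congr 1
      simp [Complex.add_re, Complex.mul_re, Complex.mul_im, Complex.I_re, Complex.I_im,
        Complex.ofReal_re, Complex.ofReal_im, Complex.sub_re, Complex.sub_im]
    · simp [abs_of_nonneg (le_trans zero_le_one hs1)]
  rw [Real.norm_of_nonneg (norm_nonneg _), hnorm]
  calc Real.exp (-(s * d)) / s ≤ Real.exp (-(s * d)) / 1 := by
        apply div_le_div_of_nonneg_left (Real.exp_pos _).le one_pos hs1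
      _ = Real.exp (-(s * d)) := by ring
      _ ≤ Real.exp (-(b / 4 * m * d)) := by
        apply Real.exp_le_exp.mpr
        have := mul_le_mul_of_nonneg_right hsm hd.le
        linarith
      _ = r ^ n.natAbs := by
        rw [hr, ← Real.exp_nat_mul]
        congr 1
        rw [← hm]; ring
end

section
/- Let B be a real symmetric positive definite n×n matrix and let s, y ∈ ℝⁿ with s ≠ 0 and sᵀy > 0. Then the BFGS update B' := B − (B s sᵀ B)/(sᵀ B s) + (y yᵀ)/(sᵀ y) is symmetric and positive definite. -/
open Matrix

lemma dot_vecMulVec_mulVec {n : ℕ} (u v x : Fin n → ℝ) :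
    x ⬝ᵥ (vecMulVec u v) *ᵥ x = (x ⬝ᵥ u) * (v ⬝ᵥ x) := by
  simp only [dotProduct, mulVec, vecMulVec_apply, Finset.mul_sum, Finset.sum_mul]
  rw [Finset.sum_comm]
  apply Finset.sum_congr rfl
  intro j _
  apply Finset.sum_congr rfl
  intro i _
  ring

/-- The BFGS update preserves symmetric positive definiteness: if `B` is real symmetric
positive definite, `s ≠ 0` and `sᵀy > 0`, then
`B' = B − (B s sᵀ B)/(sᵀ B s) + (y yᵀ)/(sᵀ y)` is symmetric positive definite. -/
theorem bfgs_update_posdef (n : ℕ) (B : Matrix (Fin n) (Fin n) ℝ)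
    (hBsymm : B.IsSymm) (hBpd : B.PosDef)
    (s y : Fin n → ℝ) (hs : s ≠ 0) (hsy : 0 < s ⬝ᵥ y)
    (B' : Matrix (Fin n) (Fin n) ℝ)
    (hB' : B' = B - (s ⬝ᵥ B.mulVec s)⁻¹ • vecMulVec (B.mulVec s) (vecMul s B)
      + (s ⬝ᵥ y)⁻¹ • vecMulVec y y) :
    B'.IsSymm ∧ B'.PosDef := by
  have hvm : vecMul s B = B.mulVec s := by
    conv_lhs => rw [← hBsymm]
    exact vecMul_transpose B s
  have ha : 0 < s ⬝ᵥ B.mulVec s := by simpa using hBpd.dotProduct_mulVec_pos hs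
  set a : ℝ := s ⬝ᵥ B.mulVec s with hadef
  -- symmetry
  have hsymm : B'.IsSymm := by
    rw [hB', hvm]
    unfold Matrix.IsSymm
    rw [transpose_add, transpose_sub, transpose_smul, transpose_smul]
    have h1 : (vecMulVec (B.mulVec s) (B.mulVec s))ᵀ = vecMulVec (B.mulVec s) (B.mulVec s) := by
      ext i j; simp [vecMulVec_apply, transpose_apply, mul_comm]
    have h2 : (vecMulVec y y)ᵀ = vecMulVec y y := by
      ext i j; simp [vecMulVec_apply, transpose_apply, mul_comm]
    rw [h1, h2, hBsymm]
  refine ⟨hsymm, Matrix.PosDef.of_dotProduct_mulVec_pos ?_ ?_⟩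
  · rw [Matrix.IsHermitian, conjTranspose_eq_transpose_of_trivial]; exact hsymm
  intro x hx
  have hvmx : vecMul x B = B.mulVec x := by
    conv_lhs => rw [← hBsymm]
    exact vecMul_transpose B x
  have hsB : x ⬝ᵥ B *ᵥ s = s ⬝ᵥ B *ᵥ x := by
    rw [dotProduct_mulVec, hvmx, dotProduct_comm]
  set b : ℝ := s ⬝ᵥ B *ᵥ x with hbdef
  -- quadratic form value
  have hval : x ⬝ᵥ B' *ᵥ x
      = x ⬝ᵥ B *ᵥ x - a⁻¹ * b ^ 2 + (s ⬝ᵥ y)⁻¹ * (y ⬝ᵥ x) ^ 2 := by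
    rw [hB', hvm]
    rw [add_mulVec, sub_mulVec, smul_mulVec, smul_mulVec,
      dotProduct_add, dotProduct_sub, dotProduct_smul, dotProduct_smul,
      dot_vecMulVec_mulVec, dot_vecMulVec_mulVec]
    have hxy : x ⬝ᵥ y = y ⬝ᵥ x := dotProduct_comm x y
    rw [hsB, hxy, dotProduct_comm (B *ᵥ s) x, hsB]
    simp only [smul_eq_mul]
    ring
  -- Cauchy–Schwarz via completion of the square
  set w : Fin n → ℝ := x - (b / a) • s with hwdef
  have hwq : w ⬝ᵥ B *ᵥ w = x ⬝ᵥ B *ᵥ x - a⁻¹ * b ^ 2 := by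
    rw [hwdef, mulVec_sub, mulVec_smul, dotProduct_sub, sub_dotProduct,
      sub_dotProduct, smul_dotProduct, smul_dotProduct, dotProduct_smul,
      dotProduct_smul, hsB]
    have : s ⬝ᵥ B *ᵥ s = a := rfl
    rw [this]
    rw [← hbdef]
    field_simp
    linear_combination (b ^ 2 * (a * a⁻¹ - 1)) * mul_inv_cancel₀ ha.ne'
  rw [star_trivial, hval, ← hwq]
  rcases eq_or_ne w 0 with hw0 | hw0
  · -- x is a nonzero multiple of s
    have hxc : x = (b / a) • s := by
      have := hw0
      rw [hwdef, sub_eq_zero] at this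
      exact this
    have hc : b / a ≠ 0 := by
      intro h
      apply hx
      rw [hxc, h, zero_smul]
    have hyx : y ⬝ᵥ x = (b / a) * (s ⬝ᵥ y) := by
      rw [hxc, dotProduct_smul, smul_eq_mul, dotProduct_comm]
    have h1 : w ⬝ᵥ B *ᵥ w = 0 := by rw [hw0]; simp
    rw [h1, zero_add]
    have hyx0 : y ⬝ᵥ x ≠ 0 := by
      rw [hyx]
      exact mul_ne_zero hc hsy.ne'
    positivity
  · have h1 : 0 < w ⬝ᵥ B *ᵥ w := by simpa using hBpd.dotProduct_mulVec_pos hw0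
    have h2 : 0 ≤ (s ⬝ᵥ y)⁻¹ * (y ⬝ᵥ x) ^ 2 := by positivity
    linarith
end
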